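/- For a connected simple graph G on n vertices, q_1(G) ≤ max over vertices u of ( d(u) + (1/d(u)) Σ_{v ~ u} d(v) ), where the sum is over neighbors v of u. -/

import Mathlib

open Matrix

/-- The signless Laplacian matrix `Q(G) = D(G) + A(G)` of a simple graph. -/
noncomputable def signlessLaplacian {V : Type*} [Fintype V] [DecidableEq V]
    (G : SimpleGraph V) : Matrix V V ℝ :=
  letI := Classical.decRel G.Adj
  Matrix.diagonal (fun v => (G.degree v : ℝ)) + G.adjMatrix ℝ

/-- The multiset of eigenvalues (with multiplicity) of a real symmetric matrix. -/
noncomputable def eigMultiset {V : Type*} [Fintype V] [DecidableEq V]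
    (A : Matrix V V ℝ) : Multiset ℝ :=
  if h : A.IsHermitian then Finset.univ.val.map h.eigenvalues else 0

/-- The `k`-th largest eigenvalue (1-indexed) of a real symmetric matrix. -/
noncomputable def kthEig {V : Type*} [Fintype V] [DecidableEq V]
    (A : Matrix V V ℝ) (k : ℕ) : ℝ :=
  ((eigMultiset A).sort (· ≥ ·)).getD (k - 1) 0

/-- Degree of a vertex, with classical decidability of adjacency. -/
noncomputable def gdeg {V : Type*} [Fintype V] (G : SimpleGraph V) (v : V) : ℕ :=
  letI := Classical.decRel G.Adj
  G.degree v

/-- The `k`-th largest degree (1-indexed, with multiplicity) of a graph. -/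
noncomputable def kthLargestDegree {V : Type*} [Fintype V] (G : SimpleGraph V) (k : ℕ) : ℕ :=
  ((Finset.univ.val.map (gdeg G)).sort (· ≥ ·)).getD (k - 1) 0

noncomputable def nbrDegSum {V : Type*} [Fintype V] (G : SimpleGraph V) (u : V) : ℝ :=
  letI := Classical.decRel G.Adj
  ∑ v ∈ G.neighborFinset u, (G.degree v : ℝ)

lemma signlessLaplacian_isHermitian {V : Type*} [Fintype V] [DecidableEq V]
    (G : SimpleGraph V) : (signlessLaplacian G).IsHermitian := by
  letI := Classical.decRel G.Adj
  unfold signlessLaplacian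
  refine Matrix.IsHermitian.add (Matrix.isHermitian_diagonal _) ?_
  rw [Matrix.IsHermitian, conjTranspose_eq_transpose_of_trivial]
  exact G.isSymm_adjMatrix

lemma eig_bound {V : Type*} [Fintype V] [DecidableEq V] [Nonempty V]
    (G : SimpleGraph V) (hconn : G.Connected)
    (hQ : (signlessLaplacian G).IsHermitian) (i : V) :
    hQ.eigenvalues i
      ≤ Finset.univ.sup' Finset.univ_nonempty
          (fun u => (gdeg G u : ℝ) + (1 / (gdeg G u : ℝ)) * nbrDegSum G u) := by
  letI := Classical.decRel G.Adj
  set μ := hQ.eigenvalues i with hμ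
  set x : V → ℝ := ⇑(hQ.eigenvectorBasis i) with hxdef
  have hx0 : x ≠ 0 := by
    intro h
    exact hQ.eigenvectorBasis.orthonormal.ne_zero i (by ext v; exact congrFun h v)
  obtain ⟨w0, hw0⟩ : ∃ w, x w ≠ 0 := by
    by_contra h
    push_neg at h
    exact hx0 (funext h)
  have heig : ∀ u, (G.degree u : ℝ) * x u + ∑ v ∈ G.neighborFinset u, x v = μ * x u := by
    intro u
    have := congrFun (hQ.mulVec_eigenvectorBasis i) u
    rw [← hxdef, Pi.smul_apply, smul_eq_mul, ← hμ] at this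
    rw [← this]
    show _ = (signlessLaplacian G *ᵥ x) u
    unfold signlessLaplacian
    rw [add_mulVec]
    simp [mulVec_diagonal, SimpleGraph.adjMatrix_mulVec_apply]
  by_cases hdeg : ∀ v, G.degree v = 0
  · -- no edges: μ = 0 and each RHS term is 0
    have hμ0 : μ = 0 := by
      have h := heig w0
      rw [hdeg w0] at h
      have hnb : G.neighborFinset w0 = ∅ := by
        rw [Finset.eq_empty_iff_forall_notMem]
        intro v hv
        rw [SimpleGraph.mem_neighborFinset] at hv
        have h2 := G.degree_pos_iff_exists_adj w0 |>.2 ⟨v, hv⟩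
        have h3 := hdeg w0
        omega
      rw [hnb] at h
      simp at h
      rcases h with h | h
      · exact h
      · exact absurd h hw0
    rw [hμ0]
    have := Finset.le_sup' (fun u => (gdeg G u : ℝ) + (1 / (gdeg G u : ℝ)) * nbrDegSum G u)
      (Finset.mem_univ w0)
    refine le_trans ?_ this
    have : nbrDegSum G w0 = ∑ v ∈ G.neighborFinset w0, (G.degree v : ℝ) := rfl
    simp [this, gdeg, hdeg]
  · push_neg at hdeg
    obtain ⟨w1, hw1⟩ := hdeg
    have hdpos : ∀ v, 0 < G.degree v := by
      intro v
      obtain ⟨p⟩ := hconn.preconnected v w1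
      cases p with
      | nil => omega
      | cons h _ => exact (G.degree_pos_iff_exists_adj v).2 ⟨_, h⟩
    have hdposR : ∀ v, (0:ℝ) < (G.degree v : ℝ) := fun v => by exact_mod_cast hdpos v
    set y : V → ℝ := fun v => |x v| / (G.degree v : ℝ) with hy
    obtain ⟨u, -, hu⟩ := Finset.exists_max_image Finset.univ y Finset.univ_nonempty
    have hyu : 0 < y u := by
      have h1 : 0 < y w0 := div_pos (abs_pos.2 hw0) (hdposR w0)
      exact lt_of_lt_of_le h1 (hu w0 (Finset.mem_univ w0))
    have hxabs : ∀ v, (G.degree v : ℝ) * y v = |x v| := by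
      intro v
      rw [hy, ← mul_div_assoc, mul_div_cancel_left₀ _ (ne_of_gt (hdposR v))]
    -- main estimate
    have key : μ * ((G.degree u : ℝ) * y u)
        ≤ (G.degree u : ℝ) * (G.degree u : ℝ) * y u
          + (∑ v ∈ G.neighborFinset u, (G.degree v : ℝ)) * y u := by
      calc μ * ((G.degree u : ℝ) * y u) = μ * |x u| := by rw [hxabs u]
        _ ≤ |μ * x u| := by
            rw [abs_mul]
            exact mul_le_mul_of_nonneg_right (le_abs_self μ) (abs_nonneg _)
        _ = |(G.degree u : ℝ) * x u + ∑ v ∈ G.neighborFinset u, x v| := by rw [heig u]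
        _ ≤ (G.degree u : ℝ) * |x u| + ∑ v ∈ G.neighborFinset u, |x v| := by
            refine (abs_add_le _ _).trans ?_
            gcongr
            · rw [abs_mul, abs_of_nonneg (le_of_lt (hdposR u))]
            · exact Finset.abs_sum_le_sum_abs _ _
        _ ≤ (G.degree u : ℝ) * ((G.degree u : ℝ) * y u)
              + ∑ v ∈ G.neighborFinset u, (G.degree v : ℝ) * y u := by
            gcongr with v hv
            · rw [hxabs u]
            · rw [← hxabs v]
              exact mul_le_mul_of_nonneg_left (hu v (Finset.mem_univ v)) (le_of_lt (hdposR v))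
        _ = (G.degree u : ℝ) * (G.degree u : ℝ) * y u
              + (∑ v ∈ G.neighborFinset u, (G.degree v : ℝ)) * y u := by
            rw [Finset.sum_mul]; ring
    have key2 : μ ≤ (G.degree u : ℝ)
        + (1 / (G.degree u : ℝ)) * ∑ v ∈ G.neighborFinset u, (G.degree v : ℝ) := by
      have hd := hdposR u
      have h1 : μ * (G.degree u : ℝ)
          ≤ (G.degree u : ℝ) * (G.degree u : ℝ)
            + ∑ v ∈ G.neighborFinset u, (G.degree v : ℝ) := by
        nlinarith [key, hyu]
      have h2 : (G.degree u : ℝ)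
          + (1 / (G.degree u : ℝ)) * ∑ v ∈ G.neighborFinset u, (G.degree v : ℝ)
          = ((G.degree u : ℝ) * (G.degree u : ℝ)
            + ∑ v ∈ G.neighborFinset u, (G.degree v : ℝ)) / (G.degree u : ℝ) := by
        field_simp
      rw [h2, le_div_iff₀ hd]
      exact h1
    refine key2.trans ?_
    have := Finset.le_sup' (fun u => (gdeg G u : ℝ) + (1 / (gdeg G u : ℝ)) * nbrDegSum G u)
      (Finset.mem_univ u)
    refine le_of_eq_of_le ?_ this
    simp only [gdeg, nbrDegSum]

theorem stmt17 {V : Type*} [Fintype V] [DecidableEq V] [Nonempty V]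
    (G : SimpleGraph V) (hconn : G.Connected) :
    kthEig (signlessLaplacian G) 1
      ≤ Finset.univ.sup' Finset.univ_nonempty
          (fun u => (gdeg G u : ℝ) + (1 / (gdeg G u : ℝ)) * nbrDegSum G u) := by
  have hQ := signlessLaplacian_isHermitian G
  have hem : eigMultiset (signlessLaplacian G) = Finset.univ.val.map hQ.eigenvalues := by
    rw [eigMultiset, dif_pos hQ]
  set l := (eigMultiset (signlessLaplacian G)).sort (· ≥ ·) with hl
  have hlen : l.length = Fintype.card V := by
    rw [hl, Multiset.length_sort, hem, Multiset.card_map]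
    rfl
  have hpos : 0 < l.length := by rw [hlen]; exact Fintype.card_pos
  have hget : kthEig (signlessLaplacian G) 1 = l.get ⟨0, hpos⟩ := by
    rw [kthEig, ← hl]
    simp [List.getD_eq_getElem?_getD, List.getElem?_eq_getElem hpos]
  have hmem : kthEig (signlessLaplacian G) 1 ∈ eigMultiset (signlessLaplacian G) := by
    rw [hget, ← Multiset.mem_sort (· ≥ ·), ← hl]
    exact List.get_mem l ⟨0, hpos⟩
  rw [hem] at hmem
  obtain ⟨i, -, hi⟩ := Multiset.mem_map.1 hmem
  rw [← hi]
  exact eig_bound G hconn hQ i
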